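/- (Equivalence in non-extended RL) For every agent π and every non-extended environment μ, the result of π_RC interacting with μ equals the result of π interacting with μ. -/

import Mathlib

/-- Alternating history x₁y₁...xₙ ending in a percept: the first percept
    together with the list of subsequent (action, percept) pairs. -/
abbrev Hist (P A : Type*) := P × List (A × P)

/-- An agent maps nonempty alternating percept-action histories
    (ending in a percept) to actions. -/
abbrev Agent (P A : Type*) := Hist P A → A

/-- `h` is possible for `π`: for all 1 ≤ i < n, π(x₁y₁...xᵢ) = yᵢ. -/
def Possible {P A : Type*} (π : Agent P A) (h : Hist P A) : Prop :=
  ∀ i, (hi : i < h.2.length) → π (h.1, h.2.take i) = (h.2.get ⟨i, hi⟩).1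

/-- Auxiliary recursion for the reality check. -/
def RCAux {P A : Type*} [DecidableEq A] (π : Agent P A) (x : P) (l : List (A × P)) : A :=
  if (∀ i, (hi : i < l.length) → RCAux π x (l.take i) = (l.get ⟨i, hi⟩).1)
  then π (x, l) else π (x, [])
termination_by l.length
decreasing_by all_goals (simp [List.length_take]; omega)

/-- The reality check π_RC of π: π_RC(s) = π(s) if s is possible for π_RC,
    else π_RC(s) = π(⟨x₁⟩). -/
def RC {P A : Type*} [DecidableEq A] (π : Agent P A) : Agent P A :=
  fun h => RCAux π h.1 h.2

/-- A non-extended environment maps even-length histories to percepts,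
    independently of the agent. -/
abbrev Env (P A : Type*) := Option (Hist P A × A) → P

/-- The history x₁y₁...xₙ₊₁ of the interaction of π with non-extended μ. -/
def ihist {P A : Type*} (μ : Env P A) (π : Agent P A) : ℕ → Hist P A
  | 0 => (μ none, [])
  | n+1 =>
    let h := ihist μ π n
    (h.1, h.2 ++ [(π h, μ (some (h, π h)))])

section Aux
variable {P A : Type*} (μ : Env P A) (π : Agent P A)

lemma ihist_fst : ∀ n, (ihist μ π n).1 = μ none
  | 0 => rfl
  | n+1 => ihist_fst n

lemma ihist_len : ∀ n, (ihist μ π n).2.length = n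
  | 0 => rfl
  | n+1 => by simp [ihist, ihist_len n]

lemma ihist_take : ∀ n i, i ≤ n → (ihist μ π n).2.take i = (ihist μ π i).2 := by
  intro n
  induction n with
  | zero => intro i hi; interval_cases i; rfl
  | succ n ih =>
    intro i hi
    rcases Nat.lt_or_ge i (n+1) with h | h
    · show ((ihist μ π n).2 ++ _).take i = _
      rw [List.take_append_of_le_length (by rw [ihist_len]; omega)]
      exact ih i (by omega)
    · have : i = n+1 := by omega
      subst this
      exact List.take_of_length_le (by rw [ihist_len])

lemma ihist_get (n i : ℕ) (hi : i < (ihist μ π n).2.length) :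
    ((ihist μ π n).2.get ⟨i, hi⟩).1 = π (ihist μ π i) := by
  have hin : i < n := by rwa [ihist_len] at hi
  have h1 : (ihist μ π n).2[i] = ((ihist μ π n).2.take (i+1))[i]'(by
      simp [List.length_take, ihist_len]; omega) :=
    List.getElem_take' hi (by omega)
  rw [List.get_eq_getElem, h1]
  simp only [ihist_take μ π n (i+1) hin]
  have h2 : (ihist μ π (i+1)).2 = (ihist μ π i).2 ++
      [(π (ihist μ π i), μ (some (ihist μ π i, π (ihist μ π i))))] := rfl
  simp only [h2]
  rw [List.getElem_append_right (by rw [ihist_len])]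
  simp [ihist_len]

lemma RC_eq_on_ihist [DecidableEq A] : ∀ n, RC π (ihist μ π n) = π (ihist μ π n) := by
  intro n
  induction n using Nat.strong_induction_on with
  | _ n ih =>
    have hcond : ∀ i, (hi : i < (ihist μ π n).2.length) →
        RCAux π (ihist μ π n).1 ((ihist μ π n).2.take i) = ((ihist μ π n).2.get ⟨i, hi⟩).1 := by
      intro i hi
      have hin : i < n := by rwa [ihist_len] at hi
      rw [ihist_take μ π n i (le_of_lt hin), ihist_get μ π n i hi]
      have := ih i hin
      rw [show RC π (ihist μ π i) = RCAux π (ihist μ π i).1 (ihist μ π i).2 from rfl,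
        ihist_fst μ π i] at this
      rw [ihist_fst μ π n]
      exact this
    show RCAux π (ihist μ π n).1 (ihist μ π n).2 = _
    rw [RCAux, if_pos hcond]

end Aux

/-- Equivalence in non-extended RL: the result of π_RC interacting with any
    non-extended environment equals the result of π interacting with it. -/
theorem realityCheck_nonextended {P A : Type*}
    [Fintype P] [Fintype A] [DecidableEq A]
    (π : Agent P A) (μ : Env P A) :
    ∀ n : ℕ, ihist μ (RC π) n = ihist μ π n := by
  intro n
  induction n with
  | zero => rfl
  | succ n ih =>
    show (_, (ihist μ (RC π) n).2 ++ _) = (_, (ihist μ π n).2 ++ _)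
    rw [ih, RC_eq_on_ihist]
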